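/- arXiv:2102.06727 — 6 statements merged into one kernel-verified Lean document; each statement's English description precedes it below -/
import Mathlib

section
/- (Soundness of the Append rule) For all programs P, C, Q, γ, if the operational triple ⟨P⟩ C ⟨Q⟩ holds, then the operational triple ⟨P⟩ C;γ ⟨Q;γ⟩ holds. -/
def pst {σ : Type*} (R : σ → σ → Prop) : Set σ := {t | ∃ s, R s t}

def seqc {σ : Type*} (R S : σ → σ → Prop) : σ → σ → Prop :=
  fun s t => ∃ u, R s u ∧ S u t

def triple {σ : Type*} (P C Q : σ → σ → Prop) : Prop :=
  pst (seqc P C) ⊆ pst Q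

def test {σ : Type*} (B : σ → Prop) : σ → σ → Prop :=
  fun s t => s = t ∧ B s

def iter {σ : Type*} (R : σ → σ → Prop) : ℕ → (σ → σ → Prop)
  | 0 => fun s t => s = t
  | (n + 1) => seqc R (iter R n)

def whileRel {σ : Type*} (B : σ → Prop) (C : σ → σ → Prop) : σ → σ → Prop :=
  fun s t => ∃ n : ℕ, seqc (iter (seqc (test B) C) n) (test (fun s => ¬ B s)) s t

theorem append_sound {σ : Type*} (P C Q γ : σ → σ → Prop)
    (h : triple P C Q) : triple P (seqc C γ) (seqc Q γ) := by
  rintro t ⟨s, u, hPu, v, hCv, hγ⟩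
  obtain ⟨w, hQ⟩ := h ⟨s, u, hPu, hCv⟩
  exact ⟨w, v, hQ, hγ⟩
end

section
/- (Soundness of the Sequential Composition rule) For all programs P, C1, C2, Q, γ, if the operational triples ⟨P⟩ C1 ⟨Q⟩ and ⟨Q⟩ C2 ⟨γ⟩ hold, then the operational triple ⟨P⟩ C1;C2 ⟨γ⟩ holds. -/
theorem seq_composition_sound {σ : Type*} (P C1 C2 Q γ : σ → σ → Prop)
    (h1 : triple P C1 Q) (h2 : triple Q C2 γ) : triple P (seqc C1 C2) γ := by
  rintro t ⟨s, u, hP, v, hC1, hC2⟩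
  obtain ⟨w, hQ⟩ := h1 ⟨s, u, hP, hC1⟩
  exact h2 ⟨w, v, hQ, hC2⟩
end

section
/- (Operational-invariant claim for the While rule) Let P and P' be programs, B a predicate on states, and C the relation of the loop body. Assume pst(P') = pst(P) ∩ {s | B s} and the operational triple ⟨P'⟩ C ⟨P⟩ holds. Then for every natural number i and all states s, t: if s ∈ pst(P) and t is reachable from s by i iterations of one loop step (i.e., (test B ; C) composed with itself i times relates s to t), then t ∈ pst(P). -/
theorem while_invariant_claim {σ : Type*} (P P' : σ → σ → Prop) (B : σ → Prop)
    (C : σ → σ → Prop)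
    (hP' : pst P' = pst P ∩ {s | B s})
    (h : triple P' C P) :
    ∀ (i : ℕ) (s t : σ), s ∈ pst P → iter (seqc (test B) C) i s t → t ∈ pst P := by
  intro i
  induction i with
  | zero => intro s t hs hst; exact hst ▸ hs
  | succ n ih =>
    intro s t hs hst
    obtain ⟨u, ⟨v, ⟨rfl, hB⟩, hC⟩, hrest⟩ := hst
    have hs' : s ∈ pst P' := hP' ▸ ⟨hs, hB⟩
    obtain ⟨x, hx⟩ := hs'
    have : u ∈ pst P := h ⟨x, s, hx, hC⟩
    exact ih u t this hrest
end

section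
/- (Soundness of the While rule) Let P, P', Q be programs, B a predicate on states, and C the relation of the loop body. Assume pst(P') = pst(P) ∩ {s | B s}, pst(Q) = pst(P) ∩ {s | ¬ B s}, and the operational triple ⟨P'⟩ C ⟨P⟩ holds. Then the operational triple ⟨P⟩ while B do C ⟨Q⟩ holds, where the relation of the while loop is ⋃ over n of ((test B ; C) iterated n times) ; test(¬B). -/
theorem while_sound {σ : Type*} (P P' Q : σ → σ → Prop) (B : σ → Prop)
    (C : σ → σ → Prop)
    (hP' : pst P' = pst P ∩ {s | B s})
    (hQ : pst Q = pst P ∩ {s | ¬ B s})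
    (h : triple P' C P) :
    triple P (whileRel B C) Q := by
  have key : ∀ n u t, u ∈ pst P → iter (seqc (test B) C) n u t → t ∈ pst P := by
    intro n
    induction n with
    | zero => intro u t hu ht; cases ht; exact hu
    | succ n ih =>
      intro u t hu ht
      obtain ⟨v, ⟨w, ⟨rfl, hBu⟩, hC⟩, hiter⟩ := ht
      have hu' : u ∈ pst P' := by rw [hP']; exact ⟨hu, hBu⟩
      obtain ⟨s0, hs0⟩ := hu'
      have hv : v ∈ pst P := h ⟨s0, u, hs0, hC⟩
      exact ih v t hv hiter
  intro t ht
  obtain ⟨s, u, hPsu, n, v, hiter, rfl, hnB⟩ := ht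
  rw [hQ]
  exact ⟨key n u v ⟨s, hPsu⟩ hiter, hnB⟩
end

section
/- (Soundness of the If rule) Let P, P', P'', Q be programs, B a predicate on states, and C1, C2 the relations of the two branches. Assume pst(P') = pst(P) ∩ {s | B s}, pst(P'') = pst(P) ∩ {s | ¬ B s}, and the operational triples ⟨P'⟩ C1 ⟨Q⟩ and ⟨P''⟩ C2 ⟨Q⟩ hold. Then the operational triple ⟨P⟩ if B then C1 else C2 ⟨Q⟩ holds, where the relation of the conditional is (test B ; C1) ∪ (test(¬B) ; C2). -/
theorem if_sound {σ : Type*} (P P' P'' Q : σ → σ → Prop) (B : σ → Prop)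
    (C1 C2 : σ → σ → Prop)
    (hP' : pst P' = pst P ∩ {s | B s})
    (hP'' : pst P'' = pst P ∩ {s | ¬ B s})
    (h1 : triple P' C1 Q) (h2 : triple P'' C2 Q) :
    triple P (fun s t => seqc (test B) C1 s t ∨ seqc (test (fun s => ¬ B s)) C2 s t) Q := by
  rintro t ⟨s, u, hPu, hC⟩
  rcases hC with ⟨v, ⟨rfl, hB⟩, hC1⟩ | ⟨v, ⟨rfl, hB⟩, hC2⟩
  · have : u ∈ pst P' := by rw [hP']; exact ⟨⟨s, hPu⟩, hB⟩
    obtain ⟨w, hw⟩ := this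
    exact h1 ⟨w, u, hw, hC1⟩
  · have : u ∈ pst P'' := by rw [hP'']; exact ⟨⟨s, hPu⟩, hB⟩
    obtain ⟨w, hw⟩ := this
    exact h2 ⟨w, u, hw, hC2⟩
end

section
/- (Soundness of the One-way If rule) Let P, P', P'', Q be programs, B a predicate on states, and C the relation of the branch. Assume pst(P') = pst(P) ∩ {s | B s}, pst(P'') = pst(P) ∩ {s | ¬ B s}, the operational triple ⟨P'⟩ C ⟨Q⟩ holds, and pst(P'') ⊆ pst(Q). Then the operational triple ⟨P⟩ if B then C ⟨Q⟩ holds, where the relation of the one-way conditional is (test B ; C) ∪ test(¬B). -/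
theorem one_way_if_sound {σ : Type*} (P P' P'' Q : σ → σ → Prop) (B : σ → Prop)
    (C : σ → σ → Prop)
    (hP' : pst P' = pst P ∩ {s | B s})
    (hP'' : pst P'' = pst P ∩ {s | ¬ B s})
    (h : triple P' C Q) (hord : pst P'' ⊆ pst Q) :
    triple P (fun s t => seqc (test B) C s t ∨ test (fun s => ¬ B s) s t) Q := by
  rintro t ⟨s, u, hPu, hif⟩
  rcases hif with ⟨v, ⟨rfl, hB⟩, hC⟩ | ⟨rfl, hB⟩
  · have hu : u ∈ pst P' := by rw [hP']; exact ⟨⟨s, hPu⟩, hB⟩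
    obtain ⟨s', hs'⟩ := hu
    exact h ⟨s', u, hs', hC⟩
  · have : u ∈ pst P'' := by rw [hP'']; exact ⟨⟨s, hPu⟩, hB⟩
    exact hord this
end
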